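/- Perturbed linear convergence lemma: let M ∈ ℝ^{n×n} be a matrix such that every complex eigenvalue of M has modulus strictly less than 1, let c ∈ ℝ^n, and let e : ℕ → ℝ^n with e(t) → 0 as t → ∞. If x : ℕ → ℝ^n satisfies x(t+1) = c + M x(t) + e(t) for all t ∈ ℕ, then I − M is invertible and x(t) → (I − M)^{−1} c as t → ∞. -/

import Mathlib

open Matrix Filter Polynomial Finset

attribute [local instance] Matrix.linftyOpNormedAddCommGroup Matrix.linftyOpNormedRing
  Matrix.linftyOpNormedAlgebra Matrix.linftyOpNormedSpace

private lemma eval_charpoly_aux {n : ℕ} (A : Matrix (Fin n) (Fin n) ℂ) (μ : ℂ) :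
    A.charpoly.eval μ = (Matrix.scalar (Fin n) μ - A).det := by
  rw [Matrix.charpoly, show Polynomial.eval μ (charmatrix A).det
      = ((charmatrix A).map (evalRingHom μ)).det from (evalRingHom μ).map_det _]
  congr 1
  ext i j
  by_cases h : i = j <;>
    simp [h, charmatrix_apply, Matrix.scalar_apply, Matrix.diagonal_apply]

private lemma spectrum_root_aux {n : ℕ} (A : Matrix (Fin n) (Fin n) ℂ) (μ : ℂ)
    (hμ : μ ∈ spectrum ℂ A) : A.charpoly.IsRoot μ := by
  rw [spectrum.mem_iff] at hμ
  rw [Matrix.isUnit_iff_isUnit_det, isUnit_iff_ne_zero, not_not] at hμ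
  rw [Polynomial.IsRoot, eval_charpoly_aux]
  convert hμ using 2
  ext i j
  simp [Matrix.algebraMap_matrix_apply, Matrix.scalar_apply, Matrix.diagonal_apply]

private lemma specrad_lt_aux {n : ℕ} (A : Matrix (Fin n) (Fin n) ℂ)
    (h : ∀ μ : ℂ, A.charpoly.IsRoot μ → ‖μ‖ < 1) :
    ∃ r : NNReal, r < 1 ∧ spectralRadius ℂ A ≤ r := by
  have hfin := A.finite_spectrum (R := ℂ)
  set F : Finset NNReal := hfin.toFinset.image (fun μ => ‖μ‖₊) with hF
  have hFlt : ∀ b ∈ F, b < 1 := by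
    intro b hb
    simp only [hF, Finset.mem_image, Set.Finite.mem_toFinset] at hb
    obtain ⟨μ, hμ, rfl⟩ := hb
    have := h μ (spectrum_root_aux A μ hμ)
    simpa [← NNReal.coe_lt_coe] using this
  have h2 : (2:NNReal)⁻¹ < 1 := by rw [← NNReal.coe_lt_coe]; norm_num
  refine ⟨(F.sup id) ⊔ (2⁻¹ : NNReal), max_lt ?_ h2, ?_⟩
  · exact (Finset.sup_lt_iff (show (⊥:NNReal) < 1 by norm_num)).mpr (fun b hb => hFlt b hb)
  · rw [spectralRadius]
    refine iSup₂_le fun μ hμ => ?_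
    have hmem : ‖μ‖₊ ∈ F := by
      simp only [hF, Finset.mem_image, Set.Finite.mem_toFinset]
      exact ⟨μ, hμ, rfl⟩
    exact_mod_cast le_trans (by exact_mod_cast Finset.le_sup (f := id) hmem) le_sup_left

private lemma pow_norm_bound_aux {n : ℕ} (A : Matrix (Fin n) (Fin n) ℂ)
    {r0 : NNReal} (hr1 : r0 < 1) (hsp : spectralRadius ℂ A ≤ r0) :
    ∃ C : NNReal, 0 < C ∧ ∃ r : NNReal, r < 1 ∧ ∀ k : ℕ, ‖A ^ k‖₊ ≤ C * r ^ k := by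
  set r : NNReal := (r0 + 1) / 2 with hr
  have hr1' : (r0 : ℝ) < 1 := by exact_mod_cast hr1
  have hr0r : r0 < r := by
    rw [hr, ← NNReal.coe_lt_coe]
    push_cast
    linarith
  have hrlt1 : r < 1 := by
    rw [hr, ← NNReal.coe_lt_coe]
    push_cast
    linarith
  have hG := spectrum.pow_nnnorm_pow_one_div_tendsto_nhds_spectralRadius A
  have hev : ∀ᶠ k : ℕ in atTop, (‖A ^ k‖₊ : ENNReal) ^ (1 / (k:ℝ)) < (r : ENNReal) := by
    apply hG.eventually_lt_const
    exact lt_of_le_of_lt hsp (by exact_mod_cast hr0r)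
  obtain ⟨N, hN⟩ := eventually_atTop.mp hev
  have key : ∀ k, N ≤ k → 1 ≤ k → ‖A ^ k‖₊ ≤ r ^ k := by
    intro k hk hk1
    have h1 := hN k hk
    have hkne : (k : ℝ) ≠ 0 := by positivity
    have h2 : ((‖A ^ k‖₊ : ENNReal) ^ (1 / (k:ℝ))) ^ (k:ℝ) ≤ ((r : ENNReal)) ^ (k:ℝ) :=
      ENNReal.rpow_le_rpow h1.le (by positivity)
    rw [← ENNReal.rpow_mul, one_div, inv_mul_cancel₀ hkne, ENNReal.rpow_one,
      ENNReal.rpow_natCast] at h2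
    exact_mod_cast h2
  set C : NNReal := ((Finset.range (N + 1)).sup fun k => ‖A ^ k‖₊ / r ^ k) ⊔ 1 with hC
  have hrpos : 0 < r := by
    rw [hr]
    positivity
  refine ⟨C, lt_of_lt_of_le one_pos le_sup_right, r, hrlt1, fun k => ?_⟩
  rcases le_or_gt k N with hkN | hkN
  · have : ‖A ^ k‖₊ / r ^ k ≤ C :=
      le_trans (Finset.le_sup (f := fun k => ‖A ^ k‖₊ / r ^ k)
        (Finset.mem_range.mpr (by omega))) le_sup_left
    calc ‖A ^ k‖₊ = ‖A ^ k‖₊ / r ^ k * r ^ k := by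
            rw [div_mul_cancel₀]
            positivity
      _ ≤ C * r ^ k := mul_le_mul_left this _
  · have hk1 : 1 ≤ k := by omega
    calc ‖A ^ k‖₊ ≤ r ^ k := key k (by omega) hk1
      _ ≤ C * r ^ k := le_mul_of_one_le_left zero_le' le_sup_right

private lemma conv_tendsto_zero_aux {r : ℝ} (hr0 : 0 ≤ r) (hr1 : r < 1) {u : ℕ → ℝ}
    (hu0 : ∀ s, 0 ≤ u s) (hu : Tendsto u atTop (nhds 0)) :
    Tendsto (fun t => ∑ s ∈ Finset.range t, r ^ (t - 1 - s) * u s) atTop (nhds 0) := by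
  have h1r : 0 < 1 - r := by linarith
  have hgeom : ∀ t : ℕ, ∑ j ∈ Finset.range t, r ^ j ≤ (1 - r)⁻¹ := by
    intro t
    have := Summable.sum_le_tsum (Finset.range t) (fun i _ => pow_nonneg hr0 i)
      (summable_geometric_of_lt_one hr0 hr1)
    rwa [tsum_geometric_of_lt_one hr0 hr1] at this
  rw [Metric.tendsto_atTop]
  intro ε hε
  set δ : ℝ := ε * (1 - r) / 4 with hδ
  have hδpos : 0 < δ := by positivity
  obtain ⟨T, hT⟩ := Metric.tendsto_atTop.mp hu δ hδpos
  have hTδ : ∀ s, T ≤ s → u s ≤ δ := by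
    intro s hs
    have := hT s hs
    rw [Real.dist_eq, sub_zero] at this
    exact le_of_lt (lt_of_abs_lt this)
  set S : ℝ := ∑ s ∈ Finset.range T, u s with hS
  have hSnn : 0 ≤ S := Finset.sum_nonneg fun s _ => hu0 s
  have h2 : Tendsto (fun t : ℕ => S * r ^ (t - T)) atTop (nhds 0) := by
    have := ((tendsto_pow_atTop_nhds_zero_of_lt_one hr0 hr1).comp
      (tendsto_sub_atTop_nat T)).const_mul S
    simpa using this
  obtain ⟨N, hN⟩ := eventually_atTop.mp (h2.eventually_lt_const (by linarith : (0:ℝ) < ε / 2))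
  refine ⟨max N T, fun t ht => ?_⟩
  have htN : N ≤ t := le_trans (le_max_left _ _) ht
  have htT : T ≤ t := le_trans (le_max_right _ _) ht
  have hterm_nn : ∀ s ∈ Finset.range t, 0 ≤ r ^ (t - 1 - s) * u s :=
    fun s _ => mul_nonneg (pow_nonneg hr0 _) (hu0 s)
  rw [Real.dist_eq, sub_zero, abs_of_nonneg (Finset.sum_nonneg hterm_nn)]
  rw [Finset.range_eq_Ico, ← Finset.sum_Ico_consecutive _ (Nat.zero_le T) htT]
  have b1 : ∑ s ∈ Finset.Ico 0 T, r ^ (t - 1 - s) * u s ≤ S * r ^ (t - T) := by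
    rw [hS, Finset.range_eq_Ico, Finset.sum_mul]
    apply Finset.sum_le_sum
    intro s hs
    rw [Finset.mem_Ico] at hs
    have hst : t - T ≤ t - 1 - s := by omega
    exact mul_le_mul_of_nonneg_right (pow_le_pow_of_le_one hr0 hr1.le hst) (hu0 s)
      |>.trans_eq (mul_comm _ _)
  have b2 : ∑ s ∈ Finset.Ico T t, r ^ (t - 1 - s) * u s ≤ δ * (1 - r)⁻¹ := by
    calc ∑ s ∈ Finset.Ico T t, r ^ (t - 1 - s) * u s
        ≤ ∑ s ∈ Finset.Ico T t, δ * r ^ (t - 1 - s) := by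
          apply Finset.sum_le_sum
          intro s hs
          rw [Finset.mem_Ico] at hs
          rw [mul_comm]
          exact mul_le_mul_of_nonneg_right (hTδ s hs.1) (pow_nonneg hr0 _)
      _ ≤ ∑ s ∈ Finset.range t, δ * r ^ (t - 1 - s) := by
          apply Finset.sum_le_sum_of_subset_of_nonneg
          · rw [Finset.range_eq_Ico]
            exact Finset.Ico_subset_Ico (Nat.zero_le _) le_rfl
          · intro s _ _
            exact mul_nonneg hδpos.le (pow_nonneg hr0 _)
      _ = δ * ∑ s ∈ Finset.range t, r ^ (t - 1 - s) := by rw [Finset.mul_sum]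
      _ = δ * ∑ j ∈ Finset.range t, r ^ j := by
          rw [Finset.sum_range_reflect (fun j => r ^ j) t]
      _ ≤ δ * (1 - r)⁻¹ := mul_le_mul_of_nonneg_left (hgeom t) hδpos.le
  have hδb : δ * (1 - r)⁻¹ = ε / 4 := by
    rw [hδ]
    field_simp
  have := hN t htN
  calc ∑ s ∈ Finset.Ico 0 T, r ^ (t - 1 - s) * u s + ∑ s ∈ Finset.Ico T t, r ^ (t - 1 - s) * u s
      ≤ S * r ^ (t - T) + δ * (1 - r)⁻¹ := add_le_add b1 b2
    _ < ε / 2 + ε / 4 := by rw [hδb]; exact add_lt_add_of_lt_of_le this le_rfl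
    _ < ε := by linarith

private lemma nnnorm_map_ofReal_aux {n : ℕ} (B : Matrix (Fin n) (Fin n) ℝ) :
    ‖B.map (fun r : ℝ => (r : ℂ))‖₊ = ‖B‖₊ := by
  rw [Matrix.linfty_opNNNorm_def, Matrix.linfty_opNNNorm_def]
  apply Finset.sup_congr rfl
  intro i _
  apply Finset.sum_congr rfl
  intro j _
  simp [Matrix.map_apply]

/-- Perturbed linear convergence lemma: if every complex eigenvalue of `M`
has modulus `< 1`, `e(t) → 0`, and `x(t+1) = c + M x(t) + e(t)`, then `I - M` is
invertible and `x(t) → (I - M)⁻¹ c`. -/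
theorem perturbed_linear_convergence
    (n : ℕ) (hn : 1 ≤ n)
    (M : Matrix (Fin n) (Fin n) ℝ)
    (heig : ∀ μ : ℂ, (M.map (fun r : ℝ => (r : ℂ))).charpoly.IsRoot μ →
        ‖μ‖ < 1)
    (c : Fin n → ℝ)
    (e : ℕ → Fin n → ℝ) (he : Tendsto e atTop (nhds 0))
    (x : ℕ → Fin n → ℝ)
    (hx : ∀ t, x (t + 1) = c + M *ᵥ x t + e t) :
    IsUnit (1 - M) ∧ Tendsto x atTop (nhds ((1 - M)⁻¹ *ᵥ c)) := by
  set Mc : Matrix (Fin n) (Fin n) ℂ := M.map (fun r : ℝ => (r : ℂ)) with hMc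
  -- powers commute with complexification
  have hmap : ∀ B : Matrix (Fin n) (Fin n) ℝ,
      B.map (fun r : ℝ => (r : ℂ)) = B.map Complex.ofRealHom := fun B => rfl
  have hpow : ∀ k : ℕ, Mc ^ k = (M ^ k).map (fun r : ℝ => (r : ℂ)) := by
    intro k
    rw [hMc, hmap, hmap, ← RingHom.mapMatrix_apply, ← RingHom.mapMatrix_apply, ← map_pow]
  -- Step 1: IsUnit (1 - M)
  have hdet : (1 - M).det ≠ 0 := by
    intro h0
    have h1 : ((1 - M).map Complex.ofRealHom).det = 0 := by
      rw [← RingHom.mapMatrix_apply, ← RingHom.map_det, h0, map_zero]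
    have h2 : Mc.charpoly.IsRoot 1 := by
      rw [Polynomial.IsRoot, eval_charpoly_aux, ← h1]
      congr 1
      ext i j
      by_cases h : i = j <;>
        simp [h, Matrix.scalar_apply, Matrix.diagonal_apply, Matrix.one_apply, hMc,
          Matrix.map_apply, Matrix.sub_apply]
    have h3 := heig 1 h2
    simp at h3
  have hunit : IsUnit (1 - M) := by
    rw [Matrix.isUnit_iff_isUnit_det, isUnit_iff_ne_zero]
    exact hdet
  refine ⟨hunit, ?_⟩
  -- Step 2: matrix power decay
  obtain ⟨r0, hr01, hsp⟩ := specrad_lt_aux Mc heig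
  obtain ⟨C, hCpos, r, hrlt1, hCr⟩ := pow_norm_bound_aux Mc hr01 hsp
  have hMk : ∀ k : ℕ, ‖M ^ k‖₊ ≤ C * r ^ k := by
    intro k
    have := hCr k
    rwa [hpow k, nnnorm_map_ofReal_aux] at this
  have hMkR : ∀ k : ℕ, ‖M ^ k‖ ≤ (C : ℝ) * (r : ℝ) ^ k := by
    intro k
    exact_mod_cast hMk k
  have hr0R : (0:ℝ) ≤ (r:ℝ) := r.coe_nonneg
  have hr1R : (r:ℝ) < 1 := by exact_mod_cast hrlt1
  -- Step 3: fixed point and error recursion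
  set xs : Fin n → ℝ := (1 - M)⁻¹ *ᵥ c with hxs
  have hfix : (1 - M) *ᵥ xs = c := by
    rw [hxs, Matrix.mulVec_mulVec, Matrix.mul_nonsing_inv _
      ((Matrix.isUnit_iff_isUnit_det _).mp hunit), Matrix.one_mulVec]
  set y : ℕ → Fin n → ℝ := fun t => x t - xs with hy
  have hyrec : ∀ t, y (t + 1) = M *ᵥ y t + e t := by
    intro t
    have h1 : (1 - M) *ᵥ xs = xs - M *ᵥ xs := by
      rw [Matrix.sub_mulVec, Matrix.one_mulVec]
    rw [hy]
    simp only
    rw [hx t, Matrix.mulVec_sub]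
    have hc : c = xs - M *ᵥ xs := by rw [← h1, hfix]
    rw [hc]
    abel
  -- closed form
  have hclosed : ∀ t, y t = (M ^ t) *ᵥ y 0 +
      ∑ s ∈ Finset.range t, (M ^ (t - 1 - s)) *ᵥ e s := by
    intro t
    induction t with
    | zero => simp [Matrix.one_mulVec]
    | succ t ih =>
      rw [hyrec t, ih, Finset.sum_range_succ]
      rw [Matrix.mulVec_add, Matrix.mulVec_mulVec, ← pow_succ']
      have hsum : M *ᵥ (∑ s ∈ Finset.range t, (M ^ (t - 1 - s)) *ᵥ e s)
          = ∑ s ∈ Finset.range t, (M ^ (t - s)) *ᵥ e s := by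
        rw [show ∀ v, M *ᵥ v = M.mulVecLin v from fun v => rfl, map_sum]
        apply Finset.sum_congr rfl
        intro s hs
        rw [Finset.mem_range] at hs
        rw [Matrix.mulVecLin_apply, Matrix.mulVec_mulVec, ← pow_succ']
        have hss : t - 1 - s + 1 = t - s := by omega
        rw [hss]
      rw [hsum]
      have hlast : (M ^ (t + 1 - 1 - t)) *ᵥ e t = e t := by
        simp [Matrix.one_mulVec]
      rw [hlast]
      have hre : ∀ s ∈ Finset.range t, (M ^ (t - s)) *ᵥ e s = (M ^ (t + 1 - 1 - s)) *ᵥ e s := by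
        intro s hs
        rw [Finset.mem_range] at hs
        have hss : t - s = t + 1 - 1 - s := by omega
        rw [hss]
      rw [Finset.sum_congr rfl hre]
      abel
  -- Step 4: convergence of the norms
  have henorm : Tendsto (fun t => ‖e t‖) atTop (nhds 0) := by
    have := he.norm
    simpa using this
  have hconv := conv_tendsto_zero_aux hr0R hr1R (fun s => norm_nonneg (e s)) henorm
  have hpowt : Tendsto (fun t : ℕ => ((C : ℝ) * ‖y 0‖) * (r:ℝ) ^ t) atTop (nhds 0) := by
    have := (tendsto_pow_atTop_nhds_zero_of_lt_one hr0R hr1R).const_mul ((C : ℝ) * ‖y 0‖)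
    simpa using this
  have hg : Tendsto (fun t => ((C : ℝ) * ‖y 0‖) * (r:ℝ) ^ t +
      (C : ℝ) * ∑ s ∈ Finset.range t, (r:ℝ) ^ (t - 1 - s) * ‖e s‖) atTop (nhds 0) := by
    have := hpowt.add (hconv.const_mul (C : ℝ))
    simpa using this
  have hybound : ∀ t, ‖y t‖ ≤ ((C : ℝ) * ‖y 0‖) * (r:ℝ) ^ t +
      (C : ℝ) * ∑ s ∈ Finset.range t, (r:ℝ) ^ (t - 1 - s) * ‖e s‖ := by
    intro t
    rw [hclosed t]
    calc ‖(M ^ t) *ᵥ y 0 + ∑ s ∈ Finset.range t, (M ^ (t - 1 - s)) *ᵥ e s‖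
        ≤ ‖(M ^ t) *ᵥ y 0‖ + ‖∑ s ∈ Finset.range t, (M ^ (t - 1 - s)) *ᵥ e s‖ :=
          norm_add_le _ _
      _ ≤ ‖M ^ t‖ * ‖y 0‖ + ∑ s ∈ Finset.range t, ‖(M ^ (t - 1 - s)) *ᵥ e s‖ :=
          add_le_add (Matrix.linfty_opNorm_mulVec _ _) (norm_sum_le _ _)
      _ ≤ ((C : ℝ) * (r:ℝ) ^ t) * ‖y 0‖ +
          ∑ s ∈ Finset.range t, ((C : ℝ) * (r:ℝ) ^ (t - 1 - s)) * ‖e s‖ := by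
          apply add_le_add
          · exact mul_le_mul_of_nonneg_right (hMkR t) (norm_nonneg _)
          · apply Finset.sum_le_sum
            intro s _
            calc ‖(M ^ (t - 1 - s)) *ᵥ e s‖ ≤ ‖M ^ (t - 1 - s)‖ * ‖e s‖ :=
                  Matrix.linfty_opNorm_mulVec _ _
              _ ≤ ((C : ℝ) * (r:ℝ) ^ (t - 1 - s)) * ‖e s‖ :=
                  mul_le_mul_of_nonneg_right (hMkR _) (norm_nonneg _)
      _ = ((C : ℝ) * ‖y 0‖) * (r:ℝ) ^ t +
          (C : ℝ) * ∑ s ∈ Finset.range t, (r:ℝ) ^ (t - 1 - s) * ‖e s‖ := by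
          rw [Finset.mul_sum]
          congr 1
          · ring
          · apply Finset.sum_congr rfl
            intro s _
            ring
  have hynorm : Tendsto (fun t => ‖y t‖) atTop (nhds 0) :=
    squeeze_zero (fun t => norm_nonneg _) hybound hg
  have hy0 : Tendsto y atTop (nhds 0) := tendsto_zero_iff_norm_tendsto_zero.mpr hynorm
  have : Tendsto (fun t => x t - xs) atTop (nhds 0) := hy0
  exact tendsto_sub_nhds_zero_iff.mp this
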